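/- Let q ≥ 0, r > 0, reals 0 ≤ θ < Φ < Φ′, p ≤ q, c, c′ ∈ (0,∞), and a < 0. Let W : ℝ → ℝ be nonnegative, Borel measurable, vanish on (−∞,0), satisfy W(z) ≤ c·e^{Φz} for all z ≥ 0 and ∫₀^∞ e^{−Φ′z}W(z)dz = 1/r. Let V : ℝ → ℝ be nonnegative, vanish on (−∞,0), with x ↦ e^{−Φ′x}·V(x) nondecreasing on (0,∞) and converging to c′ as x → ∞. With Z(x,θ) := e^{θx}(1+(q−p)∫₀ˣ e^{−θz}W(z)dz) and Z(x,Φ′) := e^{Φ′x}(1−r∫₀ˣ e^{−Φ′z}W(z)dz), one has lim_{b→∞} [Z(b−a,θ) + r·∫₀ᵇ V(b−y)·Z(y−a,θ) dy] / V(b) = [r·Z(−a,θ) + (q−p)·Z(−a,Φ′)]/(Φ′−θ). -/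

import Mathlib

open MeasureTheory Filter Set

open Topology

lemma exp_int_Ioi (s : ℝ) {k : ℝ} (hk : 0 < k) :
    ∫ x in Ioi s, Real.exp (-k * x) = Real.exp (-k * s) / k := by
  have hd : ∀ x ∈ Ici s, HasDerivAt (fun x => -Real.exp (-k * x) / k) (Real.exp (-k * x)) x := by
    intro x _
    have h1 : HasDerivAt (fun x : ℝ => -k * x) (-k) x := by
      simpa using (hasDerivAt_id x).const_mul (-k)
    have h2 := (h1.exp.neg.div_const k)
    have e : Real.exp (-k * x) = -(Real.exp (-k * x) * -k) / k := by
      rw [eq_div_iff hk.ne']; ring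
    rw [e]; exact h2
  have htend : Tendsto (fun x => -Real.exp (-k * x) / k) atTop (𝓝 0) := by
    have h3 : Tendsto (fun x : ℝ => -k * x) atTop atBot :=
      tendsto_id.const_mul_atTop_of_neg (by linarith)
    have := (Real.tendsto_exp_atBot.comp h3).neg.div_const k
    simpa using this
  have := integral_Ioi_of_hasDerivAt_of_tendsto' hd (exp_neg_integrableOn_Ioi s hk) htend
  rw [this]; ring

lemma exp_int_ivl (x : ℝ) {k : ℝ} (hk : k ≠ 0) :
    ∫ z in (0:ℝ)..x, Real.exp (k * z) = (Real.exp (k * x) - 1) / k := by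
  have hd : ∀ z ∈ uIcc (0:ℝ) x, HasDerivAt (fun z => Real.exp (k * z) / k) (Real.exp (k * z)) z := by
    intro z _
    have h1 : HasDerivAt (fun z : ℝ => k * z) k z := by
      simpa using (hasDerivAt_id z).const_mul k
    have h2 := h1.exp.div_const k
    have e : Real.exp (k * z) = Real.exp (k * z) * k / k := by
      rw [eq_div_iff hk]
    rw [e]; exact h2
  have hint : IntervalIntegrable (fun z => Real.exp (k * z)) volume 0 x :=
    (Real.continuous_exp.comp (continuous_const.mul continuous_id)).intervalIntegrable 0 x
  have := intervalIntegral.integral_eq_sub_of_hasDerivAt (fun z hz => hd z hz) hint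
  rw [this]; simp; ring

lemma bounded_intOn {f : ℝ → ℝ} {s : Set ℝ} (hs : MeasurableSet s) (hfin : volume s ≠ ⊤)
    (hm : AEStronglyMeasurable f (volume.restrict s)) {M : ℝ} (hb : ∀ x ∈ s, |f x| ≤ M) :
    IntegrableOn f s := by
  have hc : IntegrableOn (fun _ : ℝ => M) s := by
    simp [IntegrableOn, integrable_const_iff]
    exact Or.inr ⟨by rw [Measure.restrict_apply_univ]; exact hfin.lt_top⟩
  refine hc.integrable.mono' hm ?_
  filter_upwards [ae_restrict_mem hs] with x hx
  simpa using hb x hx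

set_option maxHeartbeats 2000000 in
/-- Lemma B.1(iii), convergence of `Z_a^{(q,r)}(b,θ)/W^{(q+r)}(b)` as `b → ∞`. -/
theorem stmt_4 (q r θ Φ Φ' p c c' a : ℝ) (hq : 0 ≤ q) (hr : 0 < r)
    (hθ : 0 ≤ θ) (hθΦ : θ < Φ) (hΦΦ' : Φ < Φ') (hp : p ≤ q)
    (hc : 0 < c) (hc' : 0 < c') (ha : a < 0)
    (W V : ℝ → ℝ) (hWnn : ∀ x, 0 ≤ W x) (hWm : Measurable W)
    (hW0 : ∀ x < 0, W x = 0)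
    (hWbound : ∀ z ≥ (0:ℝ), W z ≤ c * Real.exp (Φ * z))
    (hWlap : (∫ z in Set.Ioi (0:ℝ), Real.exp (-Φ' * z) * W z) = 1 / r)
    (hVnn : ∀ x, 0 ≤ V x) (hV0 : ∀ x < 0, V x = 0)
    (hVmono : MonotoneOn (fun x => Real.exp (-Φ' * x) * V x) (Set.Ioi 0))
    (hVlim : Tendsto (fun x => Real.exp (-Φ' * x) * V x) atTop (nhds c'))
    (Zθ ZΦ' : ℝ → ℝ)
    (hZθ : ∀ x, Zθ x
      = Real.exp (θ * x) * (1 + (q - p) * ∫ z in (0:ℝ)..x, Real.exp (-θ * z) * W z))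
    (hZΦ' : ∀ x, ZΦ' x
      = Real.exp (Φ' * x) * (1 - r * ∫ z in (0:ℝ)..x, Real.exp (-Φ' * z) * W z)) :
    Tendsto (fun b => (Zθ (b - a) + r * ∫ y in (0:ℝ)..b, V (b - y) * Zθ (y - a)) / V b)
      atTop (nhds ((r * Zθ (-a) + (q - p) * ZΦ' (-a)) / (Φ' - θ))) := by
  have hα : 0 ≤ q - p := sub_nonneg.2 hp
  have hθΦ' : θ < Φ' := hθΦ.trans hΦΦ'
  have hΦ'Φ : (0:ℝ) < Φ' - Φ := by linarith
  have hΦθ : (0:ℝ) < Φ - θ := by linarith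
  -- g
  set g : ℝ → ℝ := fun x => Real.exp (-Φ' * x) * V x with hgdef
  have hgnn : ∀ x, 0 ≤ g x := fun x => mul_nonneg (Real.exp_pos _).le (hVnn x)
  have hVg : ∀ x, V x = Real.exp (Φ' * x) * g x := by
    intro x
    rw [hgdef]
    simp only [← mul_assoc, ← Real.exp_add]
    ring_nf
    simp
  -- G
  set G : ℝ → ℝ := fun x => if x ≤ 0 then 0 else g x with hGdef
  have hGmono : Monotone G := by
    intro x y hxy
    rw [hGdef]
    by_cases hy : y ≤ 0
    · simp [hxy.trans hy, hy]
    · by_cases hx : x ≤ 0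
      · simpa [hx, hy] using hgnn y
      · simp only [if_neg hx, if_neg hy]
        exact hVmono (by simpa using lt_of_not_ge hx) (by simpa using lt_of_not_ge hy) hxy
  have hgle : ∀ x, 0 < x → g x ≤ c' := by
    intro x hx
    refine ge_of_tendsto hVlim ?_
    filter_upwards [eventually_ge_atTop x] with b hb
    exact hVmono hx (hx.trans_le hb) hb
  obtain ⟨b₀, hb₀g, hb₀pos⟩ :=
    ((hVlim.eventually (lt_mem_nhds (show c'/2 < c' by linarith))).and
      (eventually_gt_atTop (0:ℝ))).exists
  set m : ℝ := g b₀ with hmdef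
  have hm : 0 < m := lt_of_lt_of_le (by linarith) hb₀g.le
  have hgm : ∀ b, b₀ ≤ b → m ≤ g b := fun b hb => hVmono hb₀pos (hb₀pos.trans_le hb) hb
  -- Vt
  set Vt : ℝ → ℝ := fun x => Real.exp (Φ' * x) * G x with hVtdef
  have hGmeas : Measurable G := hGmono.measurable
  have hVtmeas : Measurable Vt :=
    (Real.measurable_exp.comp (measurable_const.mul measurable_id)).mul hGmeas
  have hVteq : ∀ x, x ≠ 0 → Vt x = V x := by
    intro x hx
    rcases lt_or_gt_of_ne hx with h | h
    · rw [hVtdef]; simp [hGdef, h.le, hV0 x h]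
    · rw [hVtdef, hGdef]
      simp only [not_le.2 h, if_neg (not_le.2 h)]
      exact (hVg x).symm
  -- W integrability on bounded Ioc
  have hWexpIoc : ∀ (β s t : ℝ), IntegrableOn (fun z => Real.exp (β * z) * W z) (Ioc s t) := by
    intro β s t
    refine bounded_intOn measurableSet_Ioc (by simp) ?_
      (M := Real.exp (|β| * (|s| + |t|)) * (c * Real.exp (|Φ| * (|s| + |t|)))) ?_
    · exact ((Real.measurable_exp.comp (measurable_const.mul measurable_id)).mul
        hWm).aestronglyMeasurable
    · intro z hz
      have hzt : z ≤ t := hz.2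
      have hzs : s < z := hz.1
      have habs : |z| ≤ |s| + |t| := by
        have h1 := neg_abs_le s
        have h2 := le_abs_self t
        have h3 := abs_nonneg s
        have h4 := abs_nonneg t
        rw [abs_le]
        constructor <;> linarith
      have h1 : Real.exp (β * z) ≤ Real.exp (|β| * (|s| + |t|)) := by
        apply Real.exp_le_exp.2
        calc β * z ≤ |β * z| := le_abs_self _
          _ = |β| * |z| := abs_mul _ _
          _ ≤ |β| * (|s| + |t|) := by
            exact mul_le_mul_of_nonneg_left habs (abs_nonneg _)
      have h2 : W z ≤ c * Real.exp (|Φ| * (|s| + |t|)) := by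
        rcases lt_or_ge z 0 with hz0 | hz0
        · rw [hW0 z hz0]; positivity
        · calc W z ≤ c * Real.exp (Φ * z) := hWbound z hz0
            _ ≤ c * Real.exp (|Φ| * (|s| + |t|)) := by
              apply mul_le_mul_of_nonneg_left _ hc.le
              apply Real.exp_le_exp.2
              calc Φ * z ≤ |Φ * z| := le_abs_self _
                _ = |Φ| * |z| := abs_mul _ _
                _ ≤ |Φ| * (|s| + |t|) := mul_le_mul_of_nonneg_left habs (abs_nonneg _)
      rw [abs_of_nonneg (mul_nonneg (Real.exp_pos _).le (hWnn z))]
      exact mul_le_mul h1 h2 (hWnn z) (Real.exp_pos _).le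
  have hWexpInt : ∀ (β s t : ℝ), IntervalIntegrable (fun z => Real.exp (β * z) * W z) volume s t := by
    intro β s t
    rw [intervalIntegrable_iff]
    exact hWexpIoc β _ _
  -- Fθ
  set Fθ : ℝ → ℝ := fun x => ∫ z in (0:ℝ)..x, Real.exp (-θ * z) * W z with hFθdef
  have hFθcont : Continuous Fθ :=
    intervalIntegral.continuous_primitive (fun s t => hWexpInt (-θ) s t) 0
  have hFθnn : ∀ x, 0 ≤ x → 0 ≤ Fθ x := by
    intro x hx
    apply intervalIntegral.integral_nonneg hx
    intro z _
    exact mul_nonneg (Real.exp_pos _).le (hWnn z)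
  have hFθle : ∀ x, 0 ≤ x → Fθ x ≤ c / (Φ - θ) * Real.exp ((Φ - θ) * x) := by
    intro x hx
    have hb : Fθ x ≤ ∫ z in (0:ℝ)..x, c * Real.exp ((Φ - θ) * z) := by
      apply intervalIntegral.integral_mono_on hx (hWexpInt (-θ) 0 x)
      · exact (continuous_const.mul (Real.continuous_exp.comp
          (continuous_const.mul continuous_id))).intervalIntegrable 0 x
      · intro z hz
        calc Real.exp (-θ * z) * W z ≤ Real.exp (-θ * z) * (c * Real.exp (Φ * z)) := by
              exact mul_le_mul_of_nonneg_left (hWbound z hz.1) (Real.exp_pos _).le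
          _ = c * Real.exp ((Φ - θ) * z) := by
              rw [mul_left_comm, ← Real.exp_add]; ring_nf
    have hint : ∫ z in (0:ℝ)..x, c * Real.exp ((Φ - θ) * z)
        = c * ((Real.exp ((Φ - θ) * x) - 1) / (Φ - θ)) := by
      rw [intervalIntegral.integral_const_mul, exp_int_ivl x hΦθ.ne']
    rw [hint] at hb
    have h5 : c * ((Real.exp ((Φ - θ) * x) - 1) / (Φ - θ))
        ≤ c * (Real.exp ((Φ - θ) * x) / (Φ - θ)) := by
      apply mul_le_mul_of_nonneg_left _ hc.le
      exact (div_le_div_iff_of_pos_right hΦθ).2 (by linarith)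
    have h6 : c * (Real.exp ((Φ - θ) * x) / (Φ - θ)) = c / (Φ - θ) * Real.exp ((Φ - θ) * x) := by
      ring
    linarith
  -- Zθ bounds
  set C : ℝ := 1 + (q - p) * (c / (Φ - θ)) with hCdef
  have hC : 0 < C := by
    have : 0 ≤ (q - p) * (c / (Φ - θ)) := mul_nonneg hα (by positivity)
    rw [hCdef]; linarith
  have hZnn : ∀ x, 0 ≤ x → 0 ≤ Zθ x := by
    intro x hx
    rw [hZθ x]
    have := hFθnn x hx
    have h2 : 0 ≤ (q - p) * Fθ x := mul_nonneg hα this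
    positivity
  have hZle : ∀ x, 0 ≤ x → Zθ x ≤ C * Real.exp (Φ * x) := by
    intro x hx
    rw [hZθ x, hCdef]
    have h1 : Real.exp (θ * x) ≤ Real.exp (Φ * x) :=
      Real.exp_le_exp.2 (mul_le_mul_of_nonneg_right hθΦ.le hx)
    have h2 : Fθ x ≤ c / (Φ - θ) * Real.exp ((Φ - θ) * x) := hFθle x hx
    have h3 : Real.exp (θ * x) * Real.exp ((Φ - θ) * x) = Real.exp (Φ * x) := by
      rw [← Real.exp_add]; ring_nf
    have h4 : 0 ≤ Fθ x := hFθnn x hx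
    have he := (Real.exp_pos (θ * x)).le
    have hcd : (0:ℝ) ≤ c / (Φ - θ) := by positivity
    calc Real.exp (θ * x) * (1 + (q - p) * Fθ x)
        = Real.exp (θ * x) + (q - p) * (Real.exp (θ * x) * Fθ x) := by ring
      _ ≤ Real.exp (Φ * x) + (q - p) * (c / (Φ - θ) * Real.exp (Φ * x)) := by
          have : Real.exp (θ * x) * Fθ x ≤ c / (Φ - θ) * Real.exp (Φ * x) := by
            calc Real.exp (θ * x) * Fθ x
                ≤ Real.exp (θ * x) * (c / (Φ - θ) * Real.exp ((Φ - θ) * x)) :=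
                  mul_le_mul_of_nonneg_left h2 he
              _ = c / (Φ - θ) * (Real.exp (θ * x) * Real.exp ((Φ - θ) * x)) := by ring
              _ = c / (Φ - θ) * Real.exp (Φ * x) := by rw [h3]
          have := mul_le_mul_of_nonneg_left this hα
          linarith
      _ = (1 + (q - p) * (c / (Φ - θ))) * Real.exp (Φ * x) := by ring
  have hZcont : Continuous Zθ := by
    have : Zθ = fun x => Real.exp (θ * x) * (1 + (q - p) * Fθ x) := funext hZθ
    rw [this]
    exact ((Real.continuous_exp.comp (continuous_const.mul continuous_id)).mul
      (continuous_const.add (continuous_const.mul hFθcont)))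
  -- integrability of e^{-Φ' z} W z on Ioi 0
  have hWlapInt : IntegrableOn (fun z => Real.exp (-Φ' * z) * W z) (Ioi 0) := by
    refine Integrable.mono' ((exp_neg_integrableOn_Ioi 0 hΦ'Φ).const_mul c) ?_ ?_
    · exact ((Real.measurable_exp.comp (measurable_const.mul measurable_id)).mul
        hWm).aestronglyMeasurable
    · filter_upwards [ae_restrict_mem measurableSet_Ioi] with z hz
      rw [Real.norm_eq_abs, abs_of_nonneg (mul_nonneg (Real.exp_pos _).le (hWnn z))]
      calc Real.exp (-Φ' * z) * W z ≤ Real.exp (-Φ' * z) * (c * Real.exp (Φ * z)) :=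
            mul_le_mul_of_nonneg_left (hWbound z (le_of_lt hz)) (Real.exp_pos _).le
        _ = c * Real.exp (-(Φ' - Φ) * z) := by rw [mul_left_comm, ← Real.exp_add]; ring_nf
  have hGnn : ∀ x, 0 ≤ G x := by
    intro x; rw [hGdef]; by_cases h : x ≤ 0 <;> simp [h, hgnn x]
  -- constants
  set k : ℝ := Φ' - θ with hkdef
  have hk : 0 < k := by rw [hkdef]; linarith
  set A : ℝ := ∫ z in Ioc (0:ℝ) (-a), Real.exp (-θ * z) * W z with hAdef
  set B : ℝ := ∫ z in Ioc (0:ℝ) (-a), Real.exp (-Φ' * z) * W z with hBdef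
  have hna : (0:ℝ) ≤ -a := by linarith
  have hB2 : ∫ z in Ioi (-a), Real.exp (-Φ' * z) * W z = 1/r - B := by
    have hu : Ioc (0:ℝ) (-a) ∪ Ioi (-a) = Ioi 0 := Ioc_union_Ioi_eq_Ioi hna
    have hsplit := setIntegral_union (Ioc_disjoint_Ioi le_rfl) measurableSet_Ioi
      (hWexpIoc (-Φ') 0 (-a)) (hWlapInt.mono_set (Ioi_subset_Ioi hna))
      (f := fun z => Real.exp (-Φ' * z) * W z) (μ := volume)
    rw [hu, hWlap] at hsplit
    linarith [hsplit]
  set μ : Measure ℝ := volume.restrict (Ioi (0:ℝ)) with hμdef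
  set f2 : ℝ → ℝ → ℝ := fun y z =>
    if z ≤ y - a then Real.exp (-k * y) * (Real.exp (-θ * z) * W z) else 0 with hf2def
  have hf2nn : ∀ y z, 0 ≤ f2 y z := by
    intro y z; rw [hf2def]; dsimp only
    split_ifs
    · exact mul_nonneg (Real.exp_pos _).le (mul_nonneg (Real.exp_pos _).le (hWnn z))
    · exact le_rfl
  have hset : MeasurableSet {p : ℝ × ℝ | p.2 ≤ p.1 - a} :=
    measurableSet_le measurable_snd (measurable_fst.sub measurable_const)
  have hf2meas : Measurable (fun p : ℝ × ℝ => f2 p.1 p.2) := by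
    rw [hf2def]
    apply Measurable.ite hset _ measurable_const
    exact ((Real.measurable_exp.comp (measurable_const.mul measurable_fst))).mul
      (((Real.measurable_exp.comp (measurable_const.mul measurable_snd))).mul
        (hWm.comp measurable_snd))
  have hf2indicator : ∀ y, f2 y = (Iic (y - a)).indicator
      (fun z => Real.exp (-k * y) * (Real.exp (-θ * z) * W z)) := by
    intro y; funext z
    simp only [hf2def, Set.indicator_apply, mem_Iic]
  have hinner : ∀ y : ℝ, Integrable (f2 y) μ := by
    intro y
    rw [hf2indicator y, integrable_indicator_iff measurableSet_Iic]
    have h1 : IntegrableOn (fun z => Real.exp (-θ * z) * W z) (Iic (y - a)) μ := by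
      rw [IntegrableOn, hμdef, Measure.restrict_restrict measurableSet_Iic,
        Set.inter_comm, Ioi_inter_Iic]
      exact hWexpIoc (-θ) 0 (y - a)
    exact h1.const_mul _
  have heq' : ∀ y : ℝ, 0 < y → ∫ z, f2 y z ∂μ = Real.exp (-k * y) * Fθ (y - a) := by
    intro y hy
    have hya : (0:ℝ) ≤ y - a := by linarith
    rw [hf2indicator y, integral_indicator measurableSet_Iic]
    rw [hμdef, Measure.restrict_restrict measurableSet_Iic, Set.inter_comm, Ioi_inter_Iic]
    rw [MeasureTheory.integral_const_mul]
    congr 1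
    rw [hFθdef]
    exact (intervalIntegral.integral_of_le hya).symm
  have heqnorm : ∀ y : ℝ, (fun z => ‖f2 y z‖) = f2 y := by
    intro y; funext z
    rw [Real.norm_eq_abs, abs_of_nonneg (hf2nn y z)]
  have hintT : IntegrableOn (fun y => Real.exp (-k * y) * Fθ (y - a)) (Ioi 0) := by
    refine Integrable.mono' ((exp_neg_integrableOn_Ioi 0 hΦ'Φ).const_mul
      (c / (Φ - θ) * Real.exp ((Φ - θ) * (-a)))) ?_ ?_
    · exact ((Real.continuous_exp.comp (continuous_const.mul continuous_id)).mul
        (hFθcont.comp (continuous_id.sub continuous_const))).aestronglyMeasurable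
    · filter_upwards [ae_restrict_mem measurableSet_Ioi] with y hy
      have hya : (0:ℝ) ≤ y - a := by
        have : (0:ℝ) < y := hy
        linarith
      rw [Real.norm_eq_abs, abs_of_nonneg (mul_nonneg (Real.exp_pos _).le (hFθnn _ hya))]
      have hstep : Real.exp (-k * y) * Fθ (y - a)
          ≤ Real.exp (-k * y) * (c / (Φ - θ) * Real.exp ((Φ - θ) * (y - a))) :=
        mul_le_mul_of_nonneg_left (hFθle _ hya) (Real.exp_pos _).le
      have hexp : Real.exp (-k * y) * Real.exp ((Φ - θ) * (y - a))
          = Real.exp ((Φ - θ) * (-a)) * Real.exp (-(Φ' - Φ) * y) := by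
        rw [← Real.exp_add, ← Real.exp_add, hkdef]; congr 1; ring
      calc Real.exp (-k * y) * Fθ (y - a)
          ≤ Real.exp (-k * y) * (c / (Φ - θ) * Real.exp ((Φ - θ) * (y - a))) := hstep
        _ = c / (Φ - θ) * Real.exp ((Φ - θ) * (-a)) * Real.exp (-(Φ' - Φ) * y) := by
            linear_combination (c / (Φ - θ)) * hexp
  have hf2prod : Integrable (Function.uncurry f2) (μ.prod μ) := by
    have huc : (Function.uncurry f2) = fun p : ℝ × ℝ => f2 p.1 p.2 := rfl
    rw [huc, integrable_prod_iff hf2meas.aestronglyMeasurable]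
    constructor
    · exact ae_of_all _ (fun y => hinner y)
    · have hcongr : (fun y => ∫ z, ‖f2 y z‖ ∂μ)
          =ᵐ[μ] (fun y => Real.exp (-k * y) * Fθ (y - a)) := by
        rw [hμdef]
        filter_upwards [ae_restrict_mem measurableSet_Ioi] with y hy
        rw [heqnorm y]
        exact heq' y hy
      exact (Integrable.congr (by rw [hμdef]; exact hintT) hcongr.symm)
  have hswap : ∫ y, (∫ z, f2 y z ∂μ) ∂μ = ∫ z, (∫ y, f2 y z ∂μ) ∂μ :=
    integral_integral_swap hf2prod
  set T : ℝ := ∫ y in Ioi (0:ℝ), Real.exp (-k * y) * Fθ (y - a) with hTdef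
  have hTleft : ∫ y, (∫ z, f2 y z ∂μ) ∂μ = T := by
    rw [hμdef, hTdef]
    exact setIntegral_congr_fun measurableSet_Ioi (fun y hy => heq' y hy)
  have hrhs1 : ∀ z ∈ Ioc (0:ℝ) (-a), (∫ y, f2 y z ∂μ)
      = Real.exp (-θ * z) * W z * (1/k) := by
    intro z hz
    have hza : z + a ≤ 0 := by have := hz.2; linarith
    have h1 : ∫ y, f2 y z ∂μ
        = ∫ y in Ioi (0:ℝ), Real.exp (-k * y) * (Real.exp (-θ * z) * W z) := by
      rw [hμdef]
      apply setIntegral_congr_fun measurableSet_Ioi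
      intro y hy
      rw [hf2def]; dsimp only
      rw [if_pos]
      have : (0:ℝ) < y := hy
      linarith
    rw [h1, MeasureTheory.integral_mul_const, exp_int_Ioi 0 hk]
    simp [mul_comm]
  have hrhs2 : ∀ z ∈ Ioi (-a), (∫ y, f2 y z ∂μ)
      = (Real.exp (-k * a) / k) * (Real.exp (-Φ' * z) * W z) := by
    intro z hz
    have hza : (0:ℝ) < z + a := by
      have : -a < z := hz
      linarith
    have hind : (fun y => f2 y z) = (Ici (z + a)).indicator
        (fun y => Real.exp (-k * y) * (Real.exp (-θ * z) * W z)) := by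
      funext y
      by_cases h : z ≤ y - a
      · rw [indicator_of_mem (by simp only [mem_Ici]; linarith)]
        rw [hf2def]; simp [h]
      · rw [indicator_of_notMem (by simp only [mem_Ici]; intro hcon; exact h (by linarith))]
        rw [hf2def]; simp [h]
    have hsub : Ici (z + a) ⊆ Ioi (0:ℝ) := fun y hy => lt_of_lt_of_le hza hy
    rw [hind, integral_indicator measurableSet_Ici, hμdef,
      Measure.restrict_restrict measurableSet_Ici, inter_eq_left.2 hsub,
      integral_Ici_eq_integral_Ioi, MeasureTheory.integral_mul_const,
      exp_int_Ioi (z + a) hk]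
    have hexp : Real.exp (-k * (z + a)) * Real.exp (-θ * z)
        = Real.exp (-k * a) * Real.exp (-Φ' * z) := by
      rw [← Real.exp_add, ← Real.exp_add, hkdef]; congr 1; ring
    linear_combination (W z / k) * hexp
  have hRint : Integrable (fun z => ∫ y, f2 y z ∂μ) μ := by
    have h := hf2prod.integral_prod_right
    simpa [Function.uncurry] using h
  have hright : ∫ z, (∫ y, f2 y z ∂μ) ∂μ
      = A * (1/k) + (Real.exp (-k * a) / k) * (1/r - B) := by
    have hu : Ioc (0:ℝ) (-a) ∪ Ioi (-a) = Ioi 0 := Ioc_union_Ioi_eq_Ioi hna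
    have hRon : IntegrableOn (fun z => ∫ y, f2 y z ∂μ) (Ioi 0) := hRint
    have hsplit := setIntegral_union (Ioc_disjoint_Ioi le_rfl) measurableSet_Ioi
      (hRon.mono_set Ioc_subset_Ioi_self) (hRon.mono_set (Ioi_subset_Ioi hna))
      (f := fun z => ∫ y, f2 y z ∂μ) (μ := volume)
    rw [hu] at hsplit
    rw [hμdef] at *
    rw [hsplit]
    have hp1 : ∫ z in Ioc (0:ℝ) (-a), (∫ y, f2 y z ∂(volume.restrict (Ioi (0:ℝ))))
        = A * (1/k) := by
      rw [setIntegral_congr_fun measurableSet_Ioc hrhs1, MeasureTheory.integral_mul_const,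
        hAdef]
    have hp2 : ∫ z in Ioi (-a), (∫ y, f2 y z ∂(volume.restrict (Ioi (0:ℝ))))
        = (Real.exp (-k * a) / k) * (1/r - B) := by
      rw [setIntegral_congr_fun measurableSet_Ioi hrhs2, MeasureTheory.integral_const_mul,
        hB2]
    rw [hp1, hp2]
  have hTval : T = A * (1/k) + (Real.exp (-k * a) / k) * (1/r - B) := by
    rw [← hTleft, hswap, hright]
  -- J
  set J : ℝ := ∫ y in Ioi (0:ℝ), Real.exp (-Φ' * y) * Zθ (y - a) with hJdef
  have hJ : J = Real.exp (θ * -a) * (1/k) + (q - p) * Real.exp (θ * -a) * T := by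
    have hpt : ∀ y ∈ Ioi (0:ℝ), Real.exp (-Φ' * y) * Zθ (y - a)
        = Real.exp (θ * -a) * Real.exp (-k * y)
          + (q - p) * Real.exp (θ * -a) * (Real.exp (-k * y) * Fθ (y - a)) := by
      intro y hy
      rw [hZθ (y - a)]
      have hFb : (∫ z in (0:ℝ)..(y - a), Real.exp (-θ * z) * W z) = Fθ (y - a) := rfl
      rw [hFb]
      have hexp : Real.exp (-Φ' * y) * Real.exp (θ * (y - a))
          = Real.exp (θ * -a) * Real.exp (-k * y) := by
        rw [← Real.exp_add, ← Real.exp_add, hkdef]; congr 1; ring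
      linear_combination (1 + (q - p) * Fθ (y - a)) * hexp
    rw [hJdef, setIntegral_congr_fun measurableSet_Ioi hpt]
    rw [MeasureTheory.integral_add ((exp_neg_integrableOn_Ioi 0 hk).const_mul _)
      (hintT.const_mul _)]
    rw [MeasureTheory.integral_const_mul, MeasureTheory.integral_const_mul,
      exp_int_Ioi 0 hk, ← hTdef]
    simp
  -- key identity
  have hkey : r * J = (r * Zθ (-a) + (q - p) * ZΦ' (-a)) / (Φ' - θ) := by
    have hZθa : Zθ (-a) = Real.exp (θ * -a) * (1 + (q - p) * A) := by
      rw [hZθ (-a), hAdef, intervalIntegral.integral_of_le hna]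
    have hZΦ'a : ZΦ' (-a) = Real.exp (Φ' * -a) * (1 - r * B) := by
      rw [hZΦ' (-a), hBdef, intervalIntegral.integral_of_le hna]
    have hexp2 : Real.exp (Φ' * -a) = Real.exp (θ * -a) * Real.exp (-k * a) := by
      rw [← Real.exp_add, hkdef]; congr 1; ring
    rw [hJ, hTval, hZθa, hZΦ'a, hexp2, ← hkdef]
    field_simp
    ring
  -- Vt facts
  have hVtform : ∀ x : ℝ, 0 < x → Vt x = Real.exp (Φ' * x) * g x := by
    intro x hx; rw [hVtdef]; dsimp only; rw [hGdef]; simp [not_le.2 hx]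
  have hVtposb : ∀ b, b₀ ≤ b → 0 < Vt b := by
    intro b hb
    rw [hVtform b (lt_of_lt_of_le hb₀pos hb)]
    exact mul_pos (Real.exp_pos _) (lt_of_lt_of_le hm (hgm b hb))
  have hVtlb : ∀ b, b₀ ≤ b → Real.exp (Φ' * b) * m ≤ Vt b := by
    intro b hb
    rw [hVtform b (lt_of_lt_of_le hb₀pos hb)]
    exact mul_le_mul_of_nonneg_left (hgm b hb) (Real.exp_pos _).le
  have hVtub : ∀ x : ℝ, 0 < x → Vt x ≤ Real.exp (Φ' * x) * c' := by
    intro x hx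
    rw [hVtform x hx]
    exact mul_le_mul_of_nonneg_left (hgle x hx) (Real.exp_pos _).le
  have hVtnn : ∀ x, 0 ≤ Vt x := by
    intro x; rw [hVtdef]; exact mul_nonneg (Real.exp_pos _).le (hGnn x)
  have hVt0 : Vt 0 = 0 := by rw [hVtdef]; simp [hGdef]
  -- DCT setup
  set K2 : ℝ := c' / m * C * Real.exp (Φ * -a) with hK2def
  have hK2 : 0 < K2 := by
    rw [hK2def]
    exact mul_pos (mul_pos (div_pos hc' hm) hC) (Real.exp_pos _)
  set FF : ℝ → ℝ → ℝ := fun b y =>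
    (Ioc (0:ℝ) b).indicator (fun y => Vt (b - y) * Zθ (y - a)) y / Vt b with hFFdef
  set L : ℝ → ℝ := fun y =>
    (Ioi (0:ℝ)).indicator (fun y => Real.exp (-Φ' * y) * Zθ (y - a)) y with hLdef
  have hIntL : ∫ y, L y = J := by
    rw [hLdef, MeasureTheory.integral_indicator measurableSet_Ioi, hJdef]
  set bound : ℝ → ℝ := fun y =>
    (Ioi (0:ℝ)).indicator (fun y => K2 * Real.exp (-(Φ' - Φ) * y)) y with hbddef
  have hboundint : Integrable bound := by
    rw [hbddef, integrable_indicator_iff measurableSet_Ioi]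
    exact (exp_neg_integrableOn_Ioi 0 hΦ'Φ).const_mul K2
  have hboundnn : ∀ y, 0 ≤ bound y := by
    intro y; rw [hbddef]
    apply indicator_nonneg
    intro x _
    exact mul_nonneg hK2.le (Real.exp_pos _).le
  have hDCT : Tendsto (fun b => ∫ y, FF b y) atTop (𝓝 J) := by
    rw [← hIntL]
    apply tendsto_integral_filter_of_dominated_convergence bound
    · filter_upwards with b
      apply Measurable.aestronglyMeasurable
      apply Measurable.div_const
      apply Measurable.indicator _ measurableSet_Ioc
      exact (hVtmeas.comp (measurable_const.sub measurable_id)).mul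
        (hZcont.measurable.comp (measurable_id.sub measurable_const))
    · filter_upwards [eventually_ge_atTop b₀] with b hb
      apply ae_of_all
      intro y
      by_cases hy : y ∈ Ioc (0:ℝ) b
      · have hy0 : 0 < y := hy.1
        have hyb : y ≤ b := hy.2
        have hD : 0 < Vt b := hVtposb b hb
        rw [hFFdef]; dsimp only; rw [indicator_of_mem hy]
        have hnum_nn : 0 ≤ Vt (b - y) * Zθ (y - a) :=
          mul_nonneg (hVtnn _) (hZnn _ (by linarith))
        rw [Real.norm_eq_abs, abs_of_nonneg (div_nonneg hnum_nn hD.le)]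
        rw [hbddef]; dsimp only; rw [indicator_of_mem (mem_Ioi.2 hy0)]
        rw [div_le_iff₀ hD]
        have hKe : 0 ≤ K2 * Real.exp (-(Φ' - Φ) * y) :=
          mul_nonneg hK2.le (Real.exp_pos _).le
        rcases eq_or_lt_of_le hyb with heq | hlt
        · rw [← heq, sub_self, hVt0, zero_mul]
          exact mul_nonneg hKe (hVtnn y)
        · have h1 : Vt (b - y) ≤ Real.exp (Φ' * (b - y)) * c' := hVtub _ (by linarith)
          have h2 : Zθ (y - a) ≤ C * Real.exp (Φ * (y - a)) := hZle _ (by linarith)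
          have h3 : Real.exp (Φ' * b) * m ≤ Vt b := hVtlb b hb
          have hmul : Vt (b - y) * Zθ (y - a)
              ≤ (Real.exp (Φ' * (b - y)) * c') * (C * Real.exp (Φ * (y - a))) :=
            mul_le_mul h1 h2 (hZnn _ (by linarith)) (by positivity)
          have e1 : Real.exp (Φ' * (b - y)) * Real.exp (Φ * (y - a))
              = Real.exp (Φ * -a) * Real.exp (-(Φ' - Φ) * y) * Real.exp (Φ' * b) := by
            rw [← Real.exp_add, ← Real.exp_add, ← Real.exp_add]; congr 1; ring
          calc Vt (b - y) * Zθ (y - a)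
              ≤ (Real.exp (Φ' * (b - y)) * c') * (C * Real.exp (Φ * (y - a))) := hmul
            _ = c' * C * (Real.exp (Φ' * (b - y)) * Real.exp (Φ * (y - a))) := by ring
            _ = c' * C * (Real.exp (Φ * -a) * Real.exp (-(Φ' - Φ) * y) * Real.exp (Φ' * b)) := by
                rw [e1]
            _ = K2 * Real.exp (-(Φ' - Φ) * y) * (Real.exp (Φ' * b) * m) := by
                rw [hK2def]; field_simp
            _ ≤ K2 * Real.exp (-(Φ' - Φ) * y) * Vt b :=
                mul_le_mul_of_nonneg_left h3 hKe
      · rw [hFFdef]; dsimp only; rw [indicator_of_notMem hy]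
        simpa using hboundnn y
    · exact hboundint
    · apply ae_of_all
      intro y
      rcases le_or_gt y 0 with hy | hy
      · have hL0 : L y = 0 := by
          rw [hLdef]; dsimp only
          rw [indicator_of_notMem (by simpa using hy)]
        rw [hL0]
        apply tendsto_const_nhds.congr
        intro b
        rw [hFFdef]; dsimp only
        rw [indicator_of_notMem (fun hmem => absurd hmem.1 (not_lt.2 hy))]
        simp
      · rw [hLdef]; dsimp only; rw [indicator_of_mem (mem_Ioi.2 hy)]
        have hshift : Tendsto (fun b : ℝ => g (b - y)) atTop (𝓝 c') := by
          apply hVlim.comp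
          simpa [sub_eq_add_neg] using tendsto_atTop_add_const_right atTop (-y) tendsto_id
        have hratio := (hshift.div hVlim hc'.ne').mul_const (Real.exp (-Φ' * y) * Zθ (y - a))
        have hval : c' / c' * (Real.exp (-Φ' * y) * Zθ (y - a))
            = Real.exp (-Φ' * y) * Zθ (y - a) := by
          rw [div_self hc'.ne', one_mul]
        rw [hval] at hratio
        apply hratio.congr'
        filter_upwards [eventually_gt_atTop y, eventually_ge_atTop b₀] with b hby hbb
        have hb0 : 0 < b := lt_of_lt_of_le hb₀pos hbb
        have hgb : g b ≠ 0 := (lt_of_lt_of_le hm (hgm b hbb)).ne'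
        have hE1 : Real.exp (Φ' * b) ≠ 0 := (Real.exp_pos _).ne'
        rw [hFFdef]; dsimp only
        rw [indicator_of_mem (show y ∈ Ioc 0 b from ⟨hy, hby.le⟩)]
        rw [hVtform (b - y) (by linarith), hVtform b hb0]
        have e2 : Real.exp (Φ' * (b - y)) = Real.exp (Φ' * b) * Real.exp (-Φ' * y) := by
          rw [← Real.exp_add]; congr 1; ring
        rw [e2, Pi.div_apply]
        field_simp
  -- term 1
  have hterm1 : Tendsto (fun b => Zθ (b - a) / Vt b) atTop (𝓝 0) := by
    set K3 : ℝ := C * Real.exp (Φ * -a) / m with hK3def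
    have hK3nn : 0 ≤ K3 := by
      rw [hK3def]
      exact div_nonneg (mul_nonneg hC.le (Real.exp_pos _).le) hm.le
    have hg0 : Tendsto (fun b : ℝ => K3 * Real.exp (-(Φ' - Φ) * b)) atTop (𝓝 0) := by
      have h3 : Tendsto (fun b : ℝ => -(Φ' - Φ) * b) atTop atBot :=
        tendsto_id.const_mul_atTop_of_neg (by linarith)
      have := (Real.tendsto_exp_atBot.comp h3).const_mul K3
      simpa using this
    apply squeeze_zero' ?_ ?_ hg0
    · filter_upwards [eventually_ge_atTop b₀] with b hb
      have hb0 : 0 < b := lt_of_lt_of_le hb₀pos hb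
      exact div_nonneg (hZnn _ (by linarith)) (hVtposb b hb).le
    · filter_upwards [eventually_ge_atTop b₀] with b hb
      have hb0 : 0 < b := lt_of_lt_of_le hb₀pos hb
      rw [div_le_iff₀ (hVtposb b hb)]
      have e3 : Real.exp (Φ * (b - a))
          = Real.exp (Φ * -a) * (Real.exp (-(Φ' - Φ) * b) * Real.exp (Φ' * b)) := by
        rw [← Real.exp_add, ← Real.exp_add]; congr 1; ring
      calc Zθ (b - a) ≤ C * Real.exp (Φ * (b - a)) := hZle _ (by linarith)
        _ = K3 * Real.exp (-(Φ' - Φ) * b) * (Real.exp (Φ' * b) * m) := by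
            rw [hK3def, e3]; field_simp
        _ ≤ K3 * Real.exp (-(Φ' - Φ) * b) * Vt b :=
            mul_le_mul_of_nonneg_left (hVtlb b hb)
              (mul_nonneg hK3nn (Real.exp_pos _).le)
  -- assemble
  have hsum : Tendsto (fun b => Zθ (b - a) / Vt b + r * ∫ y, FF b y) atTop
      (𝓝 (0 + r * J)) := hterm1.add (hDCT.const_mul r)
  rw [zero_add, hkey] at hsum
  refine Tendsto.congr' ?_ hsum
  filter_upwards [eventually_ge_atTop b₀] with b hb
  have hb0 : 0 < b := lt_of_lt_of_le hb₀pos hb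
  have hVb : Vt b = V b := hVteq b hb0.ne'
  have hI : (∫ y in (0:ℝ)..b, V (b - y) * Zθ (y - a))
      = ∫ y, (Ioc (0:ℝ) b).indicator (fun y => Vt (b - y) * Zθ (y - a)) y := by
    rw [MeasureTheory.integral_indicator measurableSet_Ioc]
    rw [intervalIntegral.integral_of_le hb0.le]
    apply setIntegral_congr_ae measurableSet_Ioc
    have hne : ∀ᵐ (y : ℝ), y ≠ b := by
      rw [ae_iff]
      have hset2 : {y : ℝ | ¬ y ≠ b} = {b} := by ext y; simp
      rw [hset2]
      exact measure_singleton b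
    filter_upwards [hne] with y hy _
    rw [hVteq (b - y) (sub_ne_zero.2 (Ne.symm hy))]
  have h2 : ∫ y, FF b y
      = (∫ y, (Ioc (0:ℝ) b).indicator (fun y => Vt (b - y) * Zθ (y - a)) y) / Vt b := by
    rw [hFFdef]
    exact integral_div _ _
  rw [h2, ← hI, hVb, mul_div_assoc' r _ (V b), ← add_div]
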